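/- Let u₁, u₂ ∈ ℝ³ be unit vectors and let v₁, v₂ ∈ ℝ³ be orthonormal vectors. Let O := (1/√2)((u₁·σ) ⊗ (v₁·σ) + (u₂·σ) ⊗ (v₂·σ)). Then 1 + ‖u₁ × u₂‖ is an eigenvalue of O² (it lies in the spectrum of O²), and every eigenvalue λ of O² satisfies λ ≤ 1 + ‖u₁ × u₂‖. (For unit vectors, ‖u₁ × u₂‖ = |sin θ| where θ is the angle between u₁ and u₂.) -/

import Mathlib

open Matrix Kronecker Complex

/-- The Pauli matrix σ₁. -/
noncomputable def σ1 : Matrix (Fin 2) (Fin 2) ℂ := !![0, 1; 1, 0]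

/-- The Pauli matrix σ₂. -/
noncomputable def σ2 : Matrix (Fin 2) (Fin 2) ℂ := !![0, -Complex.I; Complex.I, 0]

/-- The Pauli matrix σ₃. -/
noncomputable def σ3 : Matrix (Fin 2) (Fin 2) ℂ := !![1, 0; 0, -1]

/-- For `a ∈ ℝ³`, the observable `a·σ = a₁σ₁ + a₂σ₂ + a₃σ₃`. -/
noncomputable def pauliDot (a : Fin 3 → ℝ) : Matrix (Fin 2) (Fin 2) ℂ :=
  (a 0 : ℂ) • σ1 + (a 1 : ℂ) • σ2 + (a 2 : ℂ) • σ3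

/-- The Euclidean norm of a vector in `ℝ³`. -/
noncomputable def enorm3 (a : Fin 3 → ℝ) : ℝ := Real.sqrt (a ⬝ᵥ a)

lemma pauliDot_eq (a : Fin 3 → ℝ) :
    pauliDot a = !![(a 2 : ℂ), (a 0 : ℂ) - Complex.I * a 1;
                    (a 0 : ℂ) + Complex.I * a 1, -(a 2 : ℂ)] := by
  ext i j
  fin_cases i <;> fin_cases j <;>
    simp [pauliDot, σ1, σ2, σ3] <;> ring

lemma pauliDot_zero : pauliDot 0 = 0 := by
  ext i j
  fin_cases i <;> fin_cases j <;> simp [pauliDot, σ1, σ2, σ3]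

lemma pauliDot_neg (a : Fin 3 → ℝ) : pauliDot (-a) = -pauliDot a := by
  ext i j
  fin_cases i <;> fin_cases j <;> simp [pauliDot, σ1, σ2, σ3] <;> ring

lemma pauli_mul (a b : Fin 3 → ℝ) :
    pauliDot a * pauliDot b =
      ((a ⬝ᵥ b : ℝ) : ℂ) • 1 + Complex.I • pauliDot (crossProduct a b) := by
  rw [pauliDot_eq a, pauliDot_eq b, pauliDot_eq]
  ext i j
  fin_cases i <;> fin_cases j <;>
    simp [Matrix.mul_apply, Fin.sum_univ_two, crossProduct, dotProduct,
      Fin.sum_univ_three, Matrix.one_apply] <;>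
    (push_cast; ring_nf; simp only [Complex.I_sq]; ring_nf)

def e4 : Fin 4 ≃ Fin 2 × Fin 2 where
  toFun := ![(0,0),(0,1),(1,0),(1,1)]
  invFun p := ![![0,1],![2,3]] p.1 p.2
  left_inv := by decide
  right_inv := by decide

set_option maxHeartbeats 1000000 in
lemma det_aux (x a b c d e f : ℂ) :
    (x • (1 : Matrix (Fin 2 × Fin 2) (Fin 2 × Fin 2) ℂ) +
      (!![c, b; a, -c] ⊗ₖ !![f, e; d, -f])).det =
    (x ^ 2 - (a * b + c ^ 2) * (d * e + f ^ 2)) ^ 2 := by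
  rw [← Matrix.det_submatrix_equiv_self e4]
  have h : ((x • (1 : Matrix (Fin 2 × Fin 2) (Fin 2 × Fin 2) ℂ) +
      (!![c, b; a, -c] ⊗ₖ !![f, e; d, -f])).submatrix e4 e4) =
      !![x + c*f, c*e, b*f, b*e;
         c*d, x - c*f, b*d, -(b*f);
         a*f, a*e, x - c*f, -(c*e);
         a*d, -(a*f), -(c*d), x + c*f] := by
    ext i j
    fin_cases i <;> fin_cases j <;>
      simp [e4, Matrix.submatrix_apply, Matrix.one_apply, Prod.ext_iff] <;> ring
  rw [h]
  simp [Matrix.det_succ_row_zero, Fin.sum_univ_succ, Fin.succAbove,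
    Matrix.submatrix_apply, Fin.castSucc, Fin.castAdd, Fin.castLE]
  ring

/-- `det ((μ-1)•1 + pauliDot w ⊗ₖ pauliDot z)` in terms of dot products. -/
lemma det_pauli_kron (x : ℂ) (w z : Fin 3 → ℝ) :
    (x • (1 : Matrix (Fin 2 × Fin 2) (Fin 2 × Fin 2) ℂ) +
      (pauliDot w ⊗ₖ pauliDot z)).det =
    (x ^ 2 - ((w ⬝ᵥ w : ℝ) : ℂ) * ((z ⬝ᵥ z : ℝ) : ℂ)) ^ 2 := by
  rw [pauliDot_eq w, pauliDot_eq z, det_aux]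
  have hw : ((w 0 : ℂ) + Complex.I * w 1) * ((w 0 : ℂ) - Complex.I * w 1)
      + (w 2 : ℂ)^2 = ((w ⬝ᵥ w : ℝ) : ℂ) := by
    simp only [dotProduct, Fin.sum_univ_three]
    push_cast
    linear_combination (-((w 1 : ℂ))^2) * Complex.I_sq
  have hz : ((z 0 : ℂ) + Complex.I * z 1) * ((z 0 : ℂ) - Complex.I * z 1)
      + (z 2 : ℂ)^2 = ((z ⬝ᵥ z : ℝ) : ℂ) := by
    simp only [dotProduct, Fin.sum_univ_three]
    push_cast
    linear_combination (-((z 1 : ℂ))^2) * Complex.I_sq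
  rw [hw, hz]

open ComplexOrder in
/-- For unit vectors `u₁, u₂` and orthonormal `v₁, v₂`, the largest eigenvalue of `O²` is
`1 + ‖u₁ × u₂‖`: it lies in the spectrum, and every eigenvalue of `O²` is at most this value. -/
theorem steering_op_sq_largest_eigenvalue (u₁ u₂ v₁ v₂ : Fin 3 → ℝ)
    (hu₁ : u₁ ⬝ᵥ u₁ = 1) (hu₂ : u₂ ⬝ᵥ u₂ = 1) (hv₁ : v₁ ⬝ᵥ v₁ = 1) (hv₂ : v₂ ⬝ᵥ v₂ = 1)
    (hv₁₂ : v₁ ⬝ᵥ v₂ = 0)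
    (O : Matrix (Fin 2 × Fin 2) (Fin 2 × Fin 2) ℂ)
    (hO : O = ((1 / Real.sqrt 2 : ℝ) : ℂ) •
      (pauliDot u₁ ⊗ₖ pauliDot v₁ + pauliDot u₂ ⊗ₖ pauliDot v₂)) :
    ((1 + enorm3 (crossProduct u₁ u₂) : ℝ) : ℂ) ∈ spectrum ℂ (O ^ 2) ∧
      ∀ lam : ℂ, lam ∈ spectrum ℂ (O ^ 2) →
        lam ≤ ((1 + enorm3 (crossProduct u₁ u₂) : ℝ) : ℂ) := by
  set w : Fin 3 → ℝ := crossProduct u₁ u₂ with hw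
  set z : Fin 3 → ℝ := crossProduct v₁ v₂ with hzdef
  set s : ℝ := enorm3 w with hsdef
  -- basic facts about s
  have hww : (0:ℝ) ≤ w ⬝ᵥ w := by
    simp only [dotProduct, Fin.sum_univ_three]
    nlinarith [sq_nonneg (w 0), sq_nonneg (w 1), sq_nonneg (w 2)]
  have hs0 : 0 ≤ s := Real.sqrt_nonneg _
  have hs2 : s ^ 2 = w ⬝ᵥ w := Real.sq_sqrt hww
  -- cross product of orthonormal vectors is a unit vector (Lagrange identity)
  have hz1 : z ⬝ᵥ z = 1 := by
    simp only [hzdef, crossProduct, dotProduct, Fin.sum_univ_three] at hv₁ hv₂ hv₁₂ ⊢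
    simp only [LinearMap.mk₂_apply, Matrix.cons_val_zero, Matrix.cons_val_one, Matrix.head_cons,
      Matrix.cons_val_two, Matrix.tail_cons]
    nlinarith [hv₁, hv₂, hv₁₂, sq_nonneg (v₁ 0), sq_nonneg (v₂ 0)]
  -- the key algebraic identity: O² = 1 - (w·σ)⊗(z·σ)
  have hA1 : pauliDot u₁ * pauliDot u₁ = 1 := by
    rw [pauli_mul, hu₁, cross_self, pauliDot_zero]; simp
  have hA2 : pauliDot u₂ * pauliDot u₂ = 1 := by
    rw [pauli_mul, hu₂, cross_self, pauliDot_zero]; simp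
  have hB1 : pauliDot v₁ * pauliDot v₁ = 1 := by
    rw [pauli_mul, hv₁, cross_self, pauliDot_zero]; simp
  have hB2 : pauliDot v₂ * pauliDot v₂ = 1 := by
    rw [pauli_mul, hv₂, cross_self, pauliDot_zero]; simp
  have hB12 : pauliDot v₁ * pauliDot v₂ = Complex.I • pauliDot z := by
    rw [pauli_mul, hv₁₂]; simp [hzdef]
  have hB21 : pauliDot v₂ * pauliDot v₁ = (-Complex.I) • pauliDot z := by
    rw [pauli_mul, dotProduct_comm, hv₁₂, ← cross_anticomm, pauliDot_neg]
    simp [hzdef]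
  have hA12 : pauliDot u₁ * pauliDot u₂ =
      ((u₁ ⬝ᵥ u₂ : ℝ) : ℂ) • 1 + Complex.I • pauliDot w := pauli_mul u₁ u₂
  have hA21 : pauliDot u₂ * pauliDot u₁ =
      ((u₁ ⬝ᵥ u₂ : ℝ) : ℂ) • 1 + (-Complex.I) • pauliDot w := by
    rw [pauli_mul, dotProduct_comm, ← cross_anticomm, pauliDot_neg]
    simp [hw]
  have hc2 : (((1 / Real.sqrt 2 : ℝ) : ℂ)) ^ 2 = (1/2 : ℂ) := by
    rw [← Complex.ofReal_pow]
    norm_num [Real.sq_sqrt]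
  have hOsq : O ^ 2 = 1 - pauliDot w ⊗ₖ pauliDot z := by
    rw [hO, smul_pow, hc2, sq]
    rw [add_mul, mul_add, mul_add, ← Matrix.mul_kronecker_mul, ← Matrix.mul_kronecker_mul,
      ← Matrix.mul_kronecker_mul, ← Matrix.mul_kronecker_mul,
      hA1, hA2, hB1, hB2, hA12, hA21, hB12, hB21]
    simp only [Matrix.add_kronecker, Matrix.kronecker_add, Matrix.smul_kronecker,
      Matrix.kronecker_smul, Matrix.one_kronecker_one, smul_smul]
    match_scalars
    all_goals first
      | ring1
      | linear_combination Complex.I_sq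
  -- determinant of λ - O²
  have hdet : ∀ μ : ℂ, ((algebraMap ℂ _ μ) - O ^ 2).det
      = ((μ - 1) ^ 2 - ((s:ℂ))^2) ^ 2 := by
    intro μ
    have h1 : (algebraMap ℂ (Matrix (Fin 2 × Fin 2) (Fin 2 × Fin 2) ℂ) μ) - O ^ 2
        = (μ - 1) • 1 + pauliDot w ⊗ₖ pauliDot z := by
      rw [hOsq, Algebra.algebraMap_eq_smul_one, sub_smul, one_smul]
      abel
    rw [h1, det_pauli_kron, hz1]
    push_cast [← hs2]
    ring_nf
  have key : ∀ μ : ℂ, μ ∈ spectrum ℂ (O ^ 2) ↔ ((μ - 1)^2 - ((s:ℂ))^2) ^ 2 = 0 := by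
    intro μ
    rw [spectrum.mem_iff, Matrix.isUnit_iff_isUnit_det, isUnit_iff_ne_zero, not_not, hdet]
  constructor
  · rw [key]
    push_cast
    ring_nf
  · intro lam hlam
    rw [key] at hlam
    have h2 : (lam - 1 - s) * (lam - 1 + s) = 0 := by
      have := pow_eq_zero_iff (n := 2) (by norm_num) |>.mp hlam
      linear_combination this
    rcases mul_eq_zero.mp h2 with h | h
    · have : lam = ((1 + s : ℝ) : ℂ) := by push_cast; linear_combination h
      rw [this]
    · have : lam = ((1 - s : ℝ) : ℂ) := by push_cast; linear_combination h
      rw [this]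
      exact Complex.real_le_real.mpr (by linarith)
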